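/- Let m be a positive integer, 0 < λ < 1, f : ℝ^m → ℝ^m a λ-contraction, x⁰ ∈ ℝ^m, and define xⁿ⁺¹ = f(xⁿ), t⁰ = 0, tⁿ⁺¹ = λ tⁿ + ‖x¹ − x⁰‖. Let x* = lim xⁿ and t* = lim tⁿ. Then for every (x,t) ∈ Ω one has ‖x − x*‖ ≤ t − t*; that is, the limit (x*, t*) of the sequence (xⁿ, tⁿ) is a lower bound of Ω with respect to the order induced by the Lorentz cone L. -/

import Mathlib

/-- The limit `(x*, t*)` of the sequence `(xⁿ, tⁿ)` is a lower bound of `Ω` with respect to the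
order induced by the Lorentz cone: for every `(x,t) ∈ Ω`, `‖x − x*‖ ≤ t − t*`. -/
theorem stmt_5 (m : ℕ) (hm : 0 < m) (lam : ℝ) (hlam0 : 0 < lam) (hlam1 : lam < 1)
    (f : EuclideanSpace ℝ (Fin m) → EuclideanSpace ℝ (Fin m))
    (hf : ∀ x y, ‖f x - f y‖ ≤ lam * ‖x - y‖)
    (x : ℕ → EuclideanSpace ℝ (Fin m)) (t : ℕ → ℝ)
    (hx : ∀ n, x (n + 1) = f (x n)) (ht0 : t 0 = 0)
    (ht : ∀ n, t (n + 1) = lam * t n + ‖x 1 - x 0‖)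
    (xs : EuclideanSpace ℝ (Fin m)) (ts : ℝ)
    (hxs : Filter.Tendsto x Filter.atTop (nhds xs))
    (hts : Filter.Tendsto t Filter.atTop (nhds ts))
    (Ω : Set (EuclideanSpace ℝ (Fin m) × ℝ))
    (hΩ : Ω = {p : EuclideanSpace ℝ (Fin m) × ℝ |
      ‖p.1 - x 0‖ ≤ p.2 ∧ (‖x 1 - x 0‖ + ‖f p.1 - p.1‖) / (1 - lam) ≤ p.2}) :
    ∀ p ∈ Ω, ‖p.1 - xs‖ ≤ p.2 - ts := by
  have hcont : Continuous f := by
    have hlip : LipschitzWith ⟨lam, hlam0.le⟩ f := by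
      apply LipschitzWith.of_dist_le_mul
      intro a b
      exact (by simpa [dist_eq_norm] using hf a b : dist (f a) (f b) ≤ lam * dist a b)
    exact hlip.continuous
  -- f xs = xs
  have hfix : f xs = xs := by
    have h1 : Filter.Tendsto (fun n => x (n + 1)) Filter.atTop (nhds xs) :=
      hxs.comp (Filter.tendsto_add_atTop_nat 1)
    have h2 : Filter.Tendsto (fun n => f (x n)) Filter.atTop (nhds (f xs)) :=
      (hcont.tendsto xs).comp hxs
    have h3 : (fun n => x (n + 1)) = fun n => f (x n) := funext hx
    rw [h3] at h1
    exact tendsto_nhds_unique h2 h1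
  -- ts equation
  have hts_eq : ts = lam * ts + ‖x 1 - x 0‖ := by
    have h1 : Filter.Tendsto (fun n => t (n + 1)) Filter.atTop (nhds ts) :=
      hts.comp (Filter.tendsto_add_atTop_nat 1)
    have h2 : Filter.Tendsto (fun n => lam * t n + ‖x 1 - x 0‖) Filter.atTop
        (nhds (lam * ts + ‖x 1 - x 0‖)) := (hts.const_mul lam).add_const _
    have h3 : (fun n => t (n + 1)) = fun n => lam * t n + ‖x 1 - x 0‖ := funext ht
    rw [h3] at h1
    exact tendsto_nhds_unique h1 h2
  intro p hp
  rw [hΩ] at hp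
  obtain ⟨_, h2⟩ := hp
  have hkey : (1 - lam) * ‖p.1 - xs‖ ≤ ‖f p.1 - p.1‖ := by
    have ha : ‖p.1 - xs‖ ≤ ‖p.1 - f p.1‖ + ‖f p.1 - f xs‖ := by
      calc ‖p.1 - xs‖ ≤ ‖p.1 - f p.1‖ + ‖f p.1 - xs‖ := norm_sub_le_norm_sub_add_norm_sub _ _ _
        _ = ‖p.1 - f p.1‖ + ‖f p.1 - f xs‖ := by rw [hfix]
    have hb : ‖f p.1 - f xs‖ ≤ lam * ‖p.1 - xs‖ := hf p.1 xs
    have hc : ‖p.1 - f p.1‖ = ‖f p.1 - p.1‖ := norm_sub_rev _ _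
    nlinarith [ha, hb]
  have hpos : (0:ℝ) < 1 - lam := by linarith
  rw [div_le_iff₀ hpos] at h2
  nlinarith [hkey, hts_eq, h2]
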